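/- Let Σ = {a,b} and E = (a*)*. Then the prioritized Thompson pNFA Thp(E) has exponential backtracking, witnessed by the family W = {aⁿb : n ∈ ℕ}: the function n ↦ |btr_{Thp(E)}(aⁿb)| is in 2^{Ω(n)}, i.e., there exist c > 1 and N such that |btr_{Thp(E)}(aⁿb)| ≥ cⁿ for all n ≥ N. -/

import Mathlib

/-! ## Finite ordered trees -/

inductive OTree (α : Type) : Type where
  | node : α → List (OTree α) → OTree α

namespace OTree

/-- Number of nodes of a tree. -/
def size {α : Type} : OTree α → ℕ
  | node _ ts => 1 + (ts.attach.map (fun x => size x.1)).sum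
decreasing_by
  have := List.sizeOf_lt_of_mem x.2
  simp only [OTree.node.sizeOf_spec]
  omega

/-- Does some label in the tree satisfy `p`? -/
def anyLabel {α : Type} (p : α → Bool) : OTree α → Bool
  | node l ts => p l || ts.attach.any (fun x => anyLabel p x.1)
decreasing_by
  have := List.sizeOf_lt_of_mem x.2
  simp only [OTree.node.sizeOf_spec]
  omega

/-- Rank: maximum number of children of a node. -/
def rank {α : Type} : OTree α → ℕ
  | node _ ts => max ts.length ((ts.attach.map (fun x => rank x.1)).foldr max 0)
decreasing_by
  have := List.sizeOf_lt_of_mem x.2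
  simp only [OTree.node.sizeOf_spec]
  omega

/-- Root label. -/
def root {α : Type} : OTree α → α
  | node l _ => l

end OTree

/-! ## Prioritized NFA -/

/-- A prioritized NFA over alphabet `A` with state set `Q`.  `isQ2 q = true` means `q ∈ Q₂`
(the ε-states); `isQ2 q = false` means `q ∈ Q₁`.  `d1` is the (partial) deterministic
transition function on `Q₁`, `d2` the prioritized ε-transition function on `Q₂`
(the list order gives the priorities), `final` the set of final states. -/
structure PNFA (A Q : Type) where
  isQ2 : Q → Bool
  init : Q
  d1 : Q → A → Option Q
  d2 : Q → List Q
  final : Q → Bool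

/-- Labels of nodes of backtracking runs: states, `acc` and `rej`. -/
inductive BLab (Q : Type) : Type where
  | st : Q → BLab Q
  | acc : BLab Q
  | rej : BLab Q

/-- A backtracking run succeeds iff `acc` occurs in it. -/
def OTree.succeeds {Q : Type} (t : OTree (BLab Q)) : Bool :=
  t.anyLabel (fun l => match l with | BLab.acc => true | _ => false)

/-- Keep the children trees up to and including the first succeeding one
(all of them if none succeeds). -/
def firstSucc {Q : Type} : List (OTree (BLab Q)) → List (OTree (BLab Q))
  | [] => []
  | t :: ts => if t.succeeds then [t] else t :: firstSucc ts

/-- Termination measure for ε-recursions. -/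
def cMeasure {A Q : Type} [Fintype Q] (M : PNFA A Q) (C : Q → ℕ) : ℕ :=
  ∑ q : Q, ((M.d2 q).length - min (C q) (M.d2 q).length)

/-- The `(q,w,C)`-backtracking run of the pNFA `M`. -/
def btr {A Q : Type} [DecidableEq Q] [Fintype Q] (M : PNFA A Q) (q : Q) (w : List A)
    (C : Q → ℕ) : OTree (BLab Q) :=
  if M.final q = true ∧ w.isEmpty = true then .node (.st q) [.node .acc []]
  else if M.isQ2 q = true then
    if hik : (M.d2 q).length < C q + 1 then .node (.st q) [.node .rej []]
    else
      .node (.st q) (firstSucc ((List.range' (C q + 1) ((M.d2 q).length - C q)).attach.map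
        (fun x => btr M ((M.d2 q)[x.1 - 1]'(by
            have hx := x.2; rw [List.mem_range'_1] at hx; omega)) w
          (Function.update C q x.1))))
  else
    match w with
    | [] => .node (.st q) [.node .rej []]
    | a :: w' =>
      match M.d1 q a with
      | some q' => .node (.st q) [btr M q' w' (fun _ => 0)]
      | none => .node (.st q) [.node .rej []]
termination_by (w.length, cMeasure M C)
decreasing_by
  · apply Prod.Lex.right
    have hx := x.2; rw [List.mem_range'_1] at hx
    apply Finset.sum_lt_sum
    · intro p _
      by_cases hp : p = q
      · subst hp; simp only [Function.update_self]; omega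
      · simp only [Function.update_of_ne hp]; omega
    · exact ⟨q, Finset.mem_univ q, by simp only [Function.update_self]; omega⟩
  · apply Prod.Lex.left
    simp

/-- The backtracking run of `M` on `w`. -/
def btrW {A Q : Type} [DecidableEq Q] [Fintype Q] (M : PNFA A Q) (w : List A) :
    OTree (BLab Q) :=
  btr M M.init w (fun _ => 0)

/-! ## NFA with ε-transitions -/

/-- An NFA with ε-transitions (`none` plays the role of ε). -/
structure ENFA (A Q : Type) where
  init : Q
  tr : Q → Option A → Set Q
  F : Set Q

namespace ENFA

inductive Steps {A Q : Type} (N : ENFA A Q) : Q → List A → Q → Prop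
  | refl (q : Q) : Steps N q [] q
  | eps {p q r : Q} {w : List A} : q ∈ N.tr p none → Steps N q w r → Steps N p w r
  | sym {p q r : Q} {a : A} {w : List A} :
      q ∈ N.tr p (some a) → Steps N q w r → Steps N p (a :: w) r

/-- The language accepted by the ε-NFA. -/
def Lang {A Q : Type} (N : ENFA A Q) : Set (List A) :=
  {w | ∃ q, q ∈ N.F ∧ N.Steps N.init w q}

end ENFA

/-- The NFA `Ā` corresponding to a pNFA (forget priorities). -/
def PNFA.toENFA {A Q : Type} (M : PNFA A Q) : ENFA A Q where
  init := M.init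
  tr q o :=
    match o with
    | some a => if M.isQ2 q then ∅ else {q' | M.d1 q a = some q'}
    | none => if M.isQ2 q then {q' | q' ∈ M.d2 q} else ∅
  F := {q | M.final q = true}

/-! ## Growth conditions -/

/-- `f` grows exponentially, i.e. `f ∈ 2^{Ω(n)}`. -/
def ExpGrowth (f : ℕ → ℕ) : Prop :=
  ∃ c : ℝ, 1 < c ∧ ∃ N : ℕ, ∀ n ≥ N, c ^ n ≤ (f n : ℝ)

/-- `f(n) = max {|btr_M(w)| : |w| ≤ n}` (the alphabet being finite, the set below is a
nonempty bounded set of naturals, so `sSup` is its maximum). -/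
noncomputable def btrMax {A Q : Type} [Fintype A] [DecidableEq Q] [Fintype Q]
    (M : PNFA A Q) (n : ℕ) : ℕ :=
  sSup {m | ∃ w : List A, w.length ≤ n ∧ m = (btrW M w).size}

/-! ## Regular expressions (with greedy and lazy Kleene star) -/

inductive RE (A : Type) : Type where
  | zero : RE A
  | eps : RE A
  | ch : A → RE A
  | cat : RE A → RE A → RE A
  | alt : RE A → RE A → RE A
  | star : RE A → RE A
  | lazyStar : RE A → RE A

/-- The language denoted by a regular expression (the lazy star has the same
language as the greedy star). -/
def RE.lang {A : Type} : RE A → Language A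
  | .zero => 0
  | .eps => 1
  | .ch a => {[a]}
  | .cat e1 e2 => e1.lang * e2.lang
  | .alt e1 e2 => e1.lang + e2.lang
  | .star e => KStar.kstar e.lang
  | .lazyStar e => KStar.kstar e.lang

/-! ## The prioritized Thompson and Java constructions -/

/-- Raw automaton data over the state space ℕ (used to assemble the constructions;
states are allocated from a counter, so the pieces have disjoint state sets). -/
structure RawA (A : Type) where
  isQ2 : ℕ → Bool
  d1 : ℕ → A → Option ℕ
  d2 : ℕ → List ℕ

namespace RawA

/-- The raw automaton with no states/transitions. -/
def empty {A : Type} : RawA A where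
  isQ2 _ := false
  d1 _ _ := none
  d2 _ := []

/-- Disjoint union of two raw automata. -/
def merge {A : Type} (M1 M2 : RawA A) : RawA A where
  isQ2 q := M1.isQ2 q || M2.isQ2 q
  d1 q a := (M1.d1 q a).orElse (fun _ => M2.d1 q a)
  d2 q := M1.d2 q ++ M2.d2 q

/-- A single `Q₂`-state `q` with prioritized ε-transitions to `l`. -/
def epsNode {A : Type} (q : ℕ) (l : List ℕ) : RawA A where
  isQ2 p := p == q
  d1 _ _ := none
  d2 p := if p = q then l else []

/-- A single `Q₁`-state `q` reading `a` and moving to `f`. -/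
def chNode {A : Type} [DecidableEq A] (q f : ℕ) (a : A) : RawA A where
  isQ2 _ := false
  d1 p x := if p = q ∧ x = a then some f else none
  d2 _ := []

/-- Identify state `a` with state `b` (state `a` is replaced by `b` everywhere). -/
def rename {A : Type} (M : RawA A) (a b : ℕ) : RawA A where
  isQ2 q := if q = b then M.isQ2 a else if q = a then false else M.isQ2 q
  d1 q x := (if q = b then M.d1 a x else if q = a then none else M.d1 q x).map
      (fun r => if r = a then b else r)
  d2 q := (if q = b then M.d2 a else if q = a then [] else M.d2 q).map
      (fun r => if r = a then b else r)

end RawA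

/-- The prioritized Thompson construction.  `thpAux e n` builds, using fresh states
`n, n+1, …`, the quadruple (raw automaton, initial state, final state, next fresh state). -/
def thpAux {A : Type} [DecidableEq A] : RE A → ℕ → RawA A × ℕ × ℕ × ℕ
  | .zero, n => (RawA.empty, n, n + 1, n + 2)
  | .eps, n => (RawA.epsNode n [n + 1], n, n + 1, n + 2)
  | .ch a, n => (RawA.chNode n (n + 1) a, n, n + 1, n + 2)
  | .cat e1 e2, n =>
    let r1 := thpAux e1 n
    let r2 := thpAux e2 r1.2.2.2
    -- identify the final state of the first part with the initial state of the second
    (r1.1.merge (r2.1.rename r2.2.1 r1.2.2.1), r1.2.1, r2.2.2.1, r2.2.2.2)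
  | .alt e1 e2, n =>
    let r1 := thpAux e1 (n + 2)
    let r2 := thpAux e2 r1.2.2.2
    (((r1.1.merge r2.1).merge (RawA.epsNode n [r1.2.1, r2.2.1])).merge
        ((RawA.epsNode r1.2.2.1 [n + 1]).merge (RawA.epsNode r2.2.2.1 [n + 1])),
      n, n + 1, r2.2.2.2)
  | .star e1, n =>
    let r1 := thpAux e1 (n + 2)
    ((r1.1.merge (RawA.epsNode n [r1.2.1, n + 1])).merge
        (RawA.epsNode r1.2.2.1 [r1.2.1, n + 1]), n, n + 1, r1.2.2.2)
  | .lazyStar e1, n =>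
    let r1 := thpAux e1 (n + 2)
    ((r1.1.merge (RawA.epsNode n [n + 1, r1.2.1])).merge
        (RawA.epsNode r1.2.2.1 [n + 1, r1.2.1]), n, n + 1, r1.2.2.2)

/-- The Java construction.  `jpAux e n` builds, using fresh states `n, n+1, …`,
the quadruple (raw automaton, initial state, final state, next fresh state). -/
def jpAux {A : Type} [DecidableEq A] : RE A → ℕ → RawA A × ℕ × ℕ × ℕ
  | .zero, n => (RawA.empty, n, n + 1, n + 2)
  | .eps, n => (RawA.epsNode n [n + 1], n, n + 1, n + 2)
  | .ch a, n => (RawA.chNode n (n + 1) a, n, n + 1, n + 2)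
  | .cat e1 e2, n =>
    let r1 := jpAux e1 (n + 1)
    let r2 := jpAux e2 r1.2.2.2
    -- identify the initial state of the second part with the final state of the first,
    -- add a new initial state `n` with a single ε-transition to the first part
    ((r1.1.merge (r2.1.rename r2.2.1 r1.2.2.1)).merge (RawA.epsNode n [r1.2.1]),
      n, r2.2.2.1, r2.2.2.2)
  | .alt e1 e2, n =>
    let r1 := jpAux e1 (n + 1)
    let r2 := jpAux e2 r1.2.2.2
    -- identify the two final states; new initial state `n` with δ₂(n) = [q1, q2]
    ((r1.1.merge (r2.1.rename r2.2.2.1 r1.2.2.1)).merge (RawA.epsNode n [r1.2.1, r2.2.1]),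
      n, r1.2.2.1, r2.2.2.2)
  | .star e1, n =>
    let r1 := jpAux e1 (n + 1)
    -- new final state `n`; the initial state is the final state of the body,
    -- with δ₂ = [body-initial, new final]
    (r1.1.merge (RawA.epsNode r1.2.2.1 [r1.2.1, n]), r1.2.2.1, n, r1.2.2.2)
  | .lazyStar e1, n =>
    let r1 := jpAux e1 (n + 1)
    (r1.1.merge (RawA.epsNode r1.2.2.1 [n, r1.2.1]), r1.2.2.1, n, r1.2.2.2)

/-- Package a raw automaton as a pNFA on the finite state space `Fin (n+1)`. -/
def RawA.toPNFA {A : Type} (R : RawA A) (n q0 f0 : ℕ) : PNFA A (Fin (n + 1)) where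
  isQ2 q := R.isQ2 q.1
  init := if h : q0 < n + 1 then ⟨q0, h⟩ else ⟨0, Nat.succ_pos n⟩
  d1 q a := (R.d1 q.1 a).bind (fun m => if h : m < n + 1 then some ⟨m, h⟩ else none)
  d2 q := (R.d2 q.1).filterMap (fun m => if h : m < n + 1 then some ⟨m, h⟩ else none)
  final q := q.1 == f0

/-- The pNFA `Thp(E)` of the prioritized Thompson construction. -/
def thp {A : Type} [DecidableEq A] (e : RE A) : PNFA A (Fin ((thpAux e 0).2.2.2 + 1)) :=
  (thpAux e 0).1.toPNFA (thpAux e 0).2.2.2 (thpAux e 0).2.1 (thpAux e 0).2.2.1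

/-- The pNFA `Jp(E)` of the Java construction. -/
def jp {A : Type} [DecidableEq A] (e : RE A) : PNFA A (Fin ((jpAux e 0).2.2.2 + 1)) :=
  (jpAux e 0).1.toPNFA (jpAux e 0).2.2.2 (jpAux e 0).2.1 (jpAux e 0).2.2.1

/-- The two-letter alphabet Σ = {a, b}. -/
inductive AB : Type where
  | a : AB
  | b : AB
deriving DecidableEq


/-! ### Auxiliary development for statement6 -/

section Aux

lemma OTree.size_node {α : Type} (l : α) (ts : List (OTree α)) :
    (OTree.node l ts).size = 1 + (ts.map OTree.size).sum := by
  rw [OTree.size]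
  simp [List.attach_map_val]

lemma OTree.size_pos {α : Type} (t : OTree α) : 1 ≤ t.size := by
  cases t with
  | node l ts => rw [OTree.size_node]; omega

lemma OTree.anyLabel_node {α : Type} (p : α → Bool) (l : α) (ts : List (OTree α)) :
    OTree.anyLabel p (OTree.node l ts) = (p l || ts.any (OTree.anyLabel p)) := by
  rw [OTree.anyLabel]
  simp [List.attach_map_val, List.any_eq]

lemma OTree.succeeds_node {Q : Type} (l : BLab Q) (ts : List (OTree (BLab Q))) :
    OTree.succeeds (OTree.node l ts) =
      ((match l with | BLab.acc => true | _ => false) || ts.any OTree.succeeds) := by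
  rw [OTree.succeeds, OTree.anyLabel_node]
  rfl

lemma firstSucc_eq_self {Q : Type} (ts : List (OTree (BLab Q)))
    (h : ∀ t ∈ ts, t.succeeds = false) : firstSucc ts = ts := by
  induction ts with
  | nil => rfl
  | cons t ts ih =>
    rw [firstSucc, h t (by simp), if_neg (by simp)]
    rw [ih (fun t' ht' => h t' (by simp [ht']))]

def Mthp : PNFA AB (Fin 7) := thp (RE.star (RE.star (RE.ch AB.a)))

lemma mem_firstSucc {Q : Type} (ts : List (OTree (BLab Q))) (t : OTree (BLab Q))
    (ht : t ∈ firstSucc ts) : t ∈ ts := by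
  induction ts with
  | nil => simpa [firstSucc] using ht
  | cons s ts ih =>
    rw [firstSucc] at ht
    split at ht
    · simp at ht; simp [ht]
    · rcases List.mem_cons.1 ht with h | h
      · simp [h]
      · simp [ih h]

lemma btr_fail (q : Fin 7) (w : List AB) (C : Fin 7 → ℕ) (hb : AB.b ∈ w) :
    (btr Mthp q w C).succeeds = false := by
  induction q, w, C using btr.induct Mthp with
  | case1 q w C h =>
    exfalso
    rcases h with ⟨-, h2⟩
    rw [List.isEmpty_iff] at h2
    subst h2
    simp at hb
  | case2 q w C h1 h2 h3 =>
    rw [btr.eq_def, if_neg h1, if_pos h2, dif_pos h3]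
    simp [OTree.succeeds_node, OTree.succeeds, OTree.anyLabel]
  | case3 q w C h1 h2 h3 ih =>
    rw [btr.eq_def, if_neg h1, if_pos h2, dif_neg h3]
    rw [OTree.succeeds_node]
    simp only [Bool.or_eq_false_iff]
    constructor
    · trivial
    · rw [List.any_eq_false]
      intro t ht
      have ht' := mem_firstSucc _ _ ht
      rw [List.mem_map] at ht'
      obtain ⟨x, -, rfl⟩ := ht'
      simp [ih x hb]
  | case4 q C h1 h2 => simp at hb
  | case5 q C h1 a w' q' hd h2 ih =>
    have ha : a = AB.a := by
      cases a
      · rfl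
      · exfalso
        revert hd
        have : ∀ p : Fin 7, Mthp.d1 p AB.b = none := by decide
        rw [this q]
        simp
    subst ha
    have hb' : AB.b ∈ w' := by simpa using hb
    rw [btr.eq_def, if_neg h2, if_neg (by simp [h1]) ]
    simp only [hd]
    rw [OTree.succeeds_node]
    simp [ih hb']
  | case6 q C h1 a w' hd h2 =>
    rw [btr.eq_def, if_neg h2, if_neg (by simp [h1])]
    simp only [hd]
    simp [OTree.succeeds_node, OTree.succeeds, OTree.anyLabel]

end Aux



section Sizes

notation "C0" => (fun _ => 0 : Fin 7 → ℕ)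

lemma size_st1 (w : List AB) (C : Fin 7 → ℕ) :
    (btr Mthp 1 (AB.a :: w) C).size = 2 := by
  rw [btr.eq_def, if_neg (by simp), if_neg (by decide)]
  simp [show Mthp.d1 (1 : Fin 7) AB.a = none from rfl, OTree.size_node]

lemma size_st4 (w : List AB) (C : Fin 7 → ℕ) :
    (btr Mthp 4 (AB.a :: w) C).size = 1 + (btr Mthp 5 w C0).size := by
  rw [btr.eq_def, if_neg (by simp), if_neg (by decide)]
  simp [show Mthp.d1 (4 : Fin 7) AB.a = some 5 from rfl, OTree.size_node]

lemma size_n3b (w : List AB) (hb : AB.b ∈ w) :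
    (btr Mthp 3 (AB.a :: w) (Function.update (Function.update (Function.update C0 5 2) 3 1) 2 2)).size = 3 := by
  rw [btr.eq_def, if_neg (by simp), if_pos (by decide), dif_neg (by decide)]
  simp only [show Mthp.d2 (3 : Fin 7) = [2, 1] from rfl]
  rw [show (List.range' ((Function.update (Function.update (Function.update C0 5 2) 3 1) 2 2) 3 + 1) ((Mthp.d2 3).length - (Function.update (Function.update (Function.update C0 5 2) 3 1) 2 2) 3)).attach
      = [⟨2, by decide⟩] from rfl]
  simp only [List.map_cons, List.map_nil]
  norm_num
  rw [firstSucc_eq_self _ (by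
    intro t ht
    simp only [List.mem_cons, List.mem_singleton, List.not_mem_nil, or_false] at ht
    subst ht; exact btr_fail _ _ _ (List.mem_cons_of_mem _ hb))]
  rw [OTree.size_node]
  simp only [List.map_cons, List.map_nil, List.sum_cons, List.sum_nil]
  rw [size_st1 w]
  omega

lemma size_n2a (w : List AB) (hb : AB.b ∈ w) :
    (btr Mthp 2 (AB.a :: w) (Function.update (Function.update C0 5 2) 3 1)).size = 5 + (btr Mthp 5 w C0).size := by
  rw [btr.eq_def, if_neg (by simp), if_pos (by decide), dif_neg (by decide)]
  simp only [show Mthp.d2 (2 : Fin 7) = [4, 3] from rfl]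
  rw [show (List.range' ((Function.update (Function.update C0 5 2) 3 1) 2 + 1) ((Mthp.d2 2).length - (Function.update (Function.update C0 5 2) 3 1) 2)).attach
      = [⟨1, by decide⟩, ⟨2, by decide⟩] from rfl]
  simp only [List.map_cons, List.map_nil]
  norm_num
  rw [firstSucc_eq_self _ (by
    intro t ht
    simp only [List.mem_cons, List.mem_singleton, List.not_mem_nil, or_false] at ht
    rcases ht with rfl | rfl <;> exact btr_fail _ _ _ (List.mem_cons_of_mem _ hb))]
  rw [OTree.size_node]
  simp only [List.map_cons, List.map_nil, List.sum_cons, List.sum_nil]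
  rw [size_st4 w, size_n3b w hb]
  omega

lemma size_n3a (w : List AB) (hb : AB.b ∈ w) :
    (btr Mthp 3 (AB.a :: w) (Function.update C0 5 2)).size = 8 + (btr Mthp 5 w C0).size := by
  rw [btr.eq_def, if_neg (by simp), if_pos (by decide), dif_neg (by decide)]
  simp only [show Mthp.d2 (3 : Fin 7) = [2, 1] from rfl]
  rw [show (List.range' ((Function.update C0 5 2) 3 + 1) ((Mthp.d2 3).length - (Function.update C0 5 2) 3)).attach
      = [⟨1, by decide⟩, ⟨2, by decide⟩] from rfl]
  simp only [List.map_cons, List.map_nil]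
  norm_num
  rw [firstSucc_eq_self _ (by
    intro t ht
    simp only [List.mem_cons, List.mem_singleton, List.not_mem_nil, or_false] at ht
    rcases ht with rfl | rfl <;> exact btr_fail _ _ _ (List.mem_cons_of_mem _ hb))]
  rw [OTree.size_node]
  simp only [List.map_cons, List.map_nil, List.sum_cons, List.sum_nil]
  rw [size_st1 w, size_n2a w hb]
  omega

lemma size_n5 (w : List AB) (hb : AB.b ∈ w) :
    (btr Mthp 5 (AB.a :: w) C0).size = 10 + 2 * (btr Mthp 5 w C0).size := by
  rw [btr.eq_def, if_neg (by simp), if_pos (by decide), dif_neg (by decide)]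
  simp only [show Mthp.d2 (5 : Fin 7) = [4, 3] from rfl]
  rw [show (List.range' (C0 5 + 1) ((Mthp.d2 5).length - C0 5)).attach
      = [⟨1, by decide⟩, ⟨2, by decide⟩] from rfl]
  simp only [List.map_cons, List.map_nil]
  norm_num
  rw [firstSucc_eq_self _ (by
    intro t ht
    simp only [List.mem_cons, List.mem_singleton, List.not_mem_nil, or_false] at ht
    rcases ht with rfl | rfl <;> exact btr_fail _ _ _ (List.mem_cons_of_mem _ hb))]
  rw [OTree.size_node]
  simp only [List.map_cons, List.map_nil, List.sum_cons, List.sum_nil]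
  rw [size_st4 w, size_n3a w hb]
  omega

lemma size_f2b (w : List AB) :
    (btr Mthp 2 (AB.a :: w) (Function.update (Function.update (Function.update C0 0 1) 2 2) 3 1)).size = 2 := by
  rw [btr.eq_def, if_neg (by simp), if_pos (by decide), dif_pos (by decide)]
  simp [OTree.size_node]

lemma size_f3 (w : List AB) (hb : AB.b ∈ w) :
    (btr Mthp 3 (AB.a :: w) (Function.update (Function.update C0 0 1) 2 2)).size = 5 := by
  rw [btr.eq_def, if_neg (by simp), if_pos (by decide), dif_neg (by decide)]
  simp only [show Mthp.d2 (3 : Fin 7) = [2, 1] from rfl]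
  rw [show (List.range' ((Function.update (Function.update C0 0 1) 2 2) 3 + 1) ((Mthp.d2 3).length - (Function.update (Function.update C0 0 1) 2 2) 3)).attach
      = [⟨1, by decide⟩, ⟨2, by decide⟩] from rfl]
  simp only [List.map_cons, List.map_nil]
  norm_num
  rw [firstSucc_eq_self _ (by
    intro t ht
    simp only [List.mem_cons, List.mem_singleton, List.not_mem_nil, or_false] at ht
    rcases ht with rfl | rfl <;> exact btr_fail _ _ _ (List.mem_cons_of_mem _ hb))]
  rw [OTree.size_node]
  simp only [List.map_cons, List.map_nil, List.sum_cons, List.sum_nil]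
  rw [size_st1 w, size_f2b w]
  omega

lemma size_f2 (w : List AB) (hb : AB.b ∈ w) :
    (btr Mthp 2 (AB.a :: w) (Function.update C0 0 1)).size = 7 + (btr Mthp 5 w C0).size := by
  rw [btr.eq_def, if_neg (by simp), if_pos (by decide), dif_neg (by decide)]
  simp only [show Mthp.d2 (2 : Fin 7) = [4, 3] from rfl]
  rw [show (List.range' ((Function.update C0 0 1) 2 + 1) ((Mthp.d2 2).length - (Function.update C0 0 1) 2)).attach
      = [⟨1, by decide⟩, ⟨2, by decide⟩] from rfl]
  simp only [List.map_cons, List.map_nil]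
  norm_num
  rw [firstSucc_eq_self _ (by
    intro t ht
    simp only [List.mem_cons, List.mem_singleton, List.not_mem_nil, or_false] at ht
    rcases ht with rfl | rfl <;> exact btr_fail _ _ _ (List.mem_cons_of_mem _ hb))]
  rw [OTree.size_node]
  simp only [List.map_cons, List.map_nil, List.sum_cons, List.sum_nil]
  rw [size_st4 w, size_f3 w hb]
  omega

lemma size_f0 (w : List AB) (hb : AB.b ∈ w) :
    (btr Mthp 0 (AB.a :: w) C0).size = 10 + (btr Mthp 5 w C0).size := by
  rw [btr.eq_def, if_neg (by simp), if_pos (by decide), dif_neg (by decide)]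
  simp only [show Mthp.d2 (0 : Fin 7) = [2, 1] from rfl]
  rw [show (List.range' (C0 0 + 1) ((Mthp.d2 0).length - C0 0)).attach
      = [⟨1, by decide⟩, ⟨2, by decide⟩] from rfl]
  simp only [List.map_cons, List.map_nil]
  norm_num
  rw [firstSucc_eq_self _ (by
    intro t ht
    simp only [List.mem_cons, List.mem_singleton, List.not_mem_nil, or_false] at ht
    rcases ht with rfl | rfl <;> exact btr_fail _ _ _ (List.mem_cons_of_mem _ hb))]
  rw [OTree.size_node]
  simp only [List.map_cons, List.map_nil, List.sum_cons, List.sum_nil]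
  rw [size_st1 w, size_f2 w hb]
  omega

end Sizes


lemma pow32 : ∀ m : ℕ, 2 ≤ m → ((3:ℝ)/2) ^ (m+1) ≤ 2 ^ m := by
  intro m hm
  induction m, hm using Nat.le_induction with
  | base => norm_num
  | succ k hk ih =>
    have h := mul_le_mul_of_nonneg_right ih (by norm_num : (0:ℝ) ≤ 3/2)
    have h2 : (0:ℝ) ≤ 2 ^ k := pow_nonneg (by norm_num) k
    calc ((3:ℝ)/2) ^ (k+1+1) = (3/2) ^ (k+1) * (3/2) := pow_succ _ _
      _ ≤ 2 ^ k * (3/2) := h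
      _ ≤ 2 ^ k * 2 := by linarith
      _ = 2 ^ (k+1) := (pow_succ _ _).symm

/-- For `E = (a*)*`, the pNFA `Thp(E)` has exponential backtracking,
witnessed by the family `W = {aⁿb : n ∈ ℕ}`: the function
`n ↦ |btr_{Thp(E)}(aⁿb)|` is in `2^{Ω(n)}`. -/
theorem statement6 :
    ExpGrowth (fun n =>
      (btrW (thp (RE.star (RE.star (RE.ch AB.a))))
        (List.replicate n AB.a ++ [AB.b])).size) := by
  have hcons : ∀ n : ℕ,
      List.replicate (n+1) AB.a ++ [AB.b] = AB.a :: (List.replicate n AB.a ++ [AB.b]) := by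
    intro n; simp [List.replicate_succ]
  set g : ℕ → ℕ := fun n =>
    (btr Mthp 5 (List.replicate n AB.a ++ [AB.b]) C0).size with hg
  have hrec : ∀ n, g (n+1) = 10 + 2 * g n := by
    intro n
    simp only [hg]
    rw [hcons n]
    exact size_n5 _ (by simp)
  have hpow : ∀ n, 2 ^ n ≤ g n := by
    intro n
    induction n with
    | zero => simpa using OTree.size_pos _
    | succ n ih => rw [hrec n, pow_succ]; omega
  have hf : ∀ n, (btrW (thp (RE.star (RE.star (RE.ch AB.a))))
      (List.replicate (n+1) AB.a ++ [AB.b])).size = 10 + g n := by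
    intro n
    rw [show btrW (thp (RE.star (RE.star (RE.ch AB.a))))
        (List.replicate (n+1) AB.a ++ [AB.b])
      = btr Mthp 0 (List.replicate (n+1) AB.a ++ [AB.b]) C0 from rfl, hcons n]
    exact size_f0 _ (by simp)
  refine ⟨3/2, by norm_num, 3, ?_⟩
  intro n hn
  obtain ⟨m, rfl⟩ : ∃ m, n = m + 1 := ⟨n - 1, by omega⟩
  simp only []
  rw [hf m]
  have h1 : ((3:ℝ)/2) ^ (m+1) ≤ 2 ^ m := pow32 m (by omega)
  have h2 : (2:ℝ) ^ m ≤ ((10 + g m : ℕ) : ℝ) := by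
    have h3 := hpow m
    calc (2:ℝ) ^ m = ((2 ^ m : ℕ) : ℝ) := by push_cast; ring
    _ ≤ ((10 + g m : ℕ) : ℝ) := by exact_mod_cast (by omega : 2 ^ m ≤ 10 + g m)
  linarith
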